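/- arXiv:1608.03080 — 3 statements merged into one kernel-verified Lean document; each statement's English description precedes it below -/
import Mathlib

section
/- Let x = [x_ε] be an element of the Robinson–Colombeau ring ρℝ̃. Then the following are equivalent: (i) x is invertible in ρℝ̃ and x ≥ 0; (ii) for each representative (x_ε) of x, x_ε > 0 for all sufficiently small ε; (iii) for each representative (x_ε) of x, there exists m ∈ ℕ such that x_ε > ρ_ε^m for all sufficiently small ε. -/
open Filter Topology

/-- A gauge: a net of positive reals on (0,1] tending to 0 as ε → 0⁺. -/
def IsGauge (ρ : ℝ → ℝ) : Prop :=
  (∀ ε ∈ Set.Ioc (0:ℝ) 1, 0 < ρ ε) ∧ Tendsto ρ (𝓝[>] (0:ℝ)) (𝓝 0)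

/-- A net (x_ε) is ρ-moderate. -/
def Moderate (ρ x : ℝ → ℝ) : Prop :=
  ∃ a : ℝ, 0 < a ∧ ∃ C : ℝ, ∀ᶠ ε in 𝓝[>] (0:ℝ), |x ε| ≤ C * ρ ε ^ (-a)

/-- A net (z_ε) is ρ-negligible. -/
def Negligible (ρ z : ℝ → ℝ) : Prop :=
  ∀ a : ℝ, 0 < a → ∃ C : ℝ, ∀ᶠ ε in 𝓝[>] (0:ℝ), |z ε| ≤ C * ρ ε ^ a

/-- Two moderate nets represent the same element of ρℝ̃. -/
def GEquiv (ρ x y : ℝ → ℝ) : Prop := Negligible ρ (x - y)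

/-- The order on ρℝ̃ at the level of representatives: [x] ≤ [y] iff there is a
negligible net z with x_ε ≤ y_ε + z_ε for ε small. -/
def GLe (ρ x y : ℝ → ℝ) : Prop :=
  ∃ z : ℝ → ℝ, Negligible ρ z ∧ ∀ᶠ ε in 𝓝[>] (0:ℝ), x ε ≤ y ε + z ε

/-- [x] is invertible in ρℝ̃: there is a moderate net y with x·y ∼ 1. -/
def GInvertible (ρ x : ℝ → ℝ) : Prop :=
  ∃ y : ℝ → ℝ, Moderate ρ y ∧ GEquiv ρ (x * y) 1

section Aux

variable {ρ : ℝ → ℝ}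

private lemma ev_iff {P : ℝ → Prop} :
    (∀ᶠ ε in 𝓝[>] (0:ℝ), P ε) ↔ ∃ δ, 0 < δ ∧ ∀ ε ∈ Set.Ioo (0:ℝ) δ, P ε :=
  (nhdsGT_basis (0:ℝ)).eventually_iff

private lemma gauge_small (hρ : IsGauge ρ) {δ : ℝ} (hδ : 0 < δ) :
    ∀ᶠ ε in 𝓝[>] (0:ℝ), 0 < ρ ε ∧ ρ ε < δ := by
  have h1 : ∀ᶠ ε in 𝓝[>] (0:ℝ), ε ∈ Set.Ioc (0:ℝ) 1 :=
    Ioc_mem_nhdsGT_of_mem (by constructor <;> norm_num)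
  have h2 : ∀ᶠ ε in 𝓝[>] (0:ℝ), ρ ε < δ := hρ.2.eventually_lt_const hδ
  filter_upwards [h1, h2] with ε hε h2
  exact ⟨hρ.1 ε hε, h2⟩

private lemma negl_lt (hρ : IsGauge ρ) {n : ℝ → ℝ} (hn : Negligible ρ n) {c a : ℝ}
    (hc : 0 < c) (ha : 0 < a) :
    ∀ᶠ ε in 𝓝[>] (0:ℝ), |n ε| < c * ρ ε ^ a := by
  obtain ⟨C, hC⟩ := hn (a + 1) (by linarith)
  filter_upwards [hC, gauge_small hρ (show (0:ℝ) < c / (|C| + 1) by positivity)]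
    with ε h1 h2
  obtain ⟨hpos, hsmall⟩ := h2
  have hra : 0 < ρ ε ^ a := Real.rpow_pos_of_pos hpos a
  have e1 : ρ ε ^ (a + 1) = ρ ε ^ a * ρ ε := by
    rw [Real.rpow_add hpos, Real.rpow_one]
  have h3 : C * ρ ε ^ (a + 1) ≤ |C| * (ρ ε ^ a * ρ ε) := by
    rw [e1]; exact mul_le_mul_of_nonneg_right (le_abs_self C) (by positivity)
  have h4 : |C| * ρ ε < c := by
    have h5 : (|C| + 1) * ρ ε < (|C| + 1) * (c / (|C| + 1)) := by
      apply mul_lt_mul_of_pos_left hsmall (by positivity)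
    rw [mul_div_cancel₀ c (by positivity)] at h5
    nlinarith [abs_nonneg C, hpos]
  calc |n ε| ≤ C * ρ ε ^ (a + 1) := h1
    _ ≤ |C| * (ρ ε ^ a * ρ ε) := h3
    _ < c * ρ ε ^ a := by nlinarith [abs_nonneg C]

private lemma negl_add {n m : ℝ → ℝ} (hn : Negligible ρ n) (hm : Negligible ρ m) :
    Negligible ρ (n + m) := by
  intro a ha
  obtain ⟨C, hC⟩ := hn a ha
  obtain ⟨D, hD⟩ := hm a ha
  refine ⟨C + D, ?_⟩
  filter_upwards [hC, hD] with ε h1 h2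
  calc |(n + m) ε| ≤ |n ε| + |m ε| := abs_add_le _ _
    _ ≤ (C + D) * ρ ε ^ a := by nlinarith

/-- Core: if a moderate net fails (iii), there is an equivalent net failing (ii). -/
private lemma core (hρ : IsGauge ρ) {x' : ℝ → ℝ} (hx' : Moderate ρ x')
    (h : ∀ m : ℕ, ¬ ∀ᶠ ε in 𝓝[>] (0:ℝ), ρ ε ^ m < x' ε) :
    ∃ x'' : ℝ → ℝ, Moderate ρ x'' ∧ GEquiv ρ x'' x' ∧
      ¬ ∀ᶠ ε in 𝓝[>] (0:ℝ), 0 < x'' ε := by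
  classical
  -- frequently x' ε ≤ ρ ε ^ m
  have H : ∀ (k : ℕ) (δ : ℝ), ∃ ε, 0 < δ → ε ∈ Set.Ioo (0:ℝ) δ ∧ x' ε ≤ ρ ε ^ k := by
    intro k δ
    by_cases hδ : 0 < δ
    · have hf : ¬ ∃ δ', 0 < δ' ∧ ∀ ε ∈ Set.Ioo (0:ℝ) δ', ρ ε ^ k < x' ε := by
        rw [← ev_iff]; exact h k
      push_neg at hf
      obtain ⟨ε, hε1, hε2⟩ := hf δ hδ
      exact ⟨ε, fun _ => ⟨hε1, hε2⟩⟩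
    · exact ⟨0, fun h' => absurd h' hδ⟩
  choose f hf using H
  -- recursively chosen strictly decreasing sequence
  let E : ℕ → ℝ := fun k => Nat.rec (f 0 1) (fun n En => f (n + 1) (min En (1 / (n + 2)))) k
  have hE0 : E 0 ∈ Set.Ioo (0:ℝ) 1 ∧ x' (E 0) ≤ ρ (E 0) ^ 0 := hf 0 1 one_pos
  have hEstep : ∀ n, 0 < E n →
      E (n + 1) ∈ Set.Ioo (0:ℝ) (min (E n) (1 / (n + 2))) ∧
        x' (E (n + 1)) ≤ ρ (E (n + 1)) ^ (n + 1) := by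
    intro n hn
    exact hf (n + 1) (min (E n) (1 / (n + 2))) (lt_min hn (by positivity))
  have hEpos : ∀ n, 0 < E n := by
    intro n; induction n with
    | zero => exact hE0.1.1
    | succ n ih => exact (hEstep n ih).1.1
  have hEdec : StrictAnti E := by
    apply strictAnti_nat_of_succ_lt
    intro n
    exact lt_of_lt_of_le (hEstep n (hEpos n)).1.2 (min_le_left _ _)
  have hEsm : ∀ n, E n < 1 / (n + 1) := by
    intro n; cases n with
    | zero => simpa using hE0.1.2
    | succ n => exact lt_of_lt_of_le (hEstep n (hEpos n)).1.2 (by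
        apply le_trans (min_le_right _ _)
        apply le_of_eq
        push_cast
        ring_nf)
  have hEbd : ∀ n, x' (E n) ≤ ρ (E n) ^ n := by
    intro n; cases n with
    | zero => exact hE0.2
    | succ n => exact (hEstep n (hEpos n)).2
  set x'' : ℝ → ℝ := fun ε => if ε ∈ Set.range E then min (x' ε) 0 else x' ε with hx''def
  have habs : ∀ ε, |x'' ε| ≤ |x' ε| := by
    intro ε
    simp only [hx''def]
    split
    · rcases le_or_gt (x' ε) 0 with h | h
      · rw [min_eq_left h]
      · rw [min_eq_right h.le]; simpa using h.le
    · exact le_rfl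
  refine ⟨x'', ?_, ?_, ?_⟩
  · obtain ⟨a, ha, C, hC⟩ := hx'
    exact ⟨a, ha, C, by filter_upwards [hC] with ε h1 using le_trans (habs ε) h1⟩
  · -- Negligible (x'' - x')
    intro a ha
    refine ⟨1, ?_⟩
    set N := ⌈a⌉₊ with hN
    rw [ev_iff]
    obtain ⟨δ₁, hδ₁, hδ₁'⟩ := ev_iff.mp (gauge_small hρ one_pos)
    refine ⟨min (E N) δ₁, lt_min (hEpos N) hδ₁, ?_⟩
    rintro ε ⟨hε1, hε2⟩
    have hε3 : ε < E N := lt_of_lt_of_le hε2 (min_le_left _ _)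
    have hρε := hδ₁' ε ⟨hε1, lt_of_lt_of_le hε2 (min_le_right _ _)⟩
    rw [one_mul]
    by_cases hmem : ε ∈ Set.range E
    · obtain ⟨k, hk⟩ := hmem
      have hkN : N < k := by
        by_contra hc
        push_neg at hc
        have := hEdec.antitone hc
        rw [hk] at this
        exact absurd hε3 (not_lt.mpr this)
      have hak : a ≤ (k : ℝ) := le_trans (Nat.le_ceil a) (by exact_mod_cast hkN.le)
      have key : ρ ε ^ k ≤ ρ ε ^ a := by
        rw [← Real.rpow_natCast (ρ ε) k]
        exact Real.rpow_le_rpow_of_exponent_ge hρε.1 hρε.2.le hak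
      have hbd : x' ε ≤ ρ ε ^ k := hk ▸ hEbd k
      have hxx : x'' ε = min (x' ε) 0 := by
        simp only [hx''def]
        rw [if_pos (show ε ∈ Set.range E from ⟨k, hk⟩)]
      rw [Pi.sub_apply, hxx]
      rcases le_or_gt (x' ε) 0 with hc | hc
      · rw [min_eq_left hc]; simpa using (Real.rpow_pos_of_pos hρε.1 a).le
      · rw [min_eq_right hc.le, zero_sub, abs_neg, abs_of_pos hc]
        exact le_trans hbd key
    · have : x'' ε = x' ε := by simp only [hx''def, if_neg hmem]
      rw [Pi.sub_apply, this, sub_self, abs_zero]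
      exact (Real.rpow_pos_of_pos hρε.1 a).le
  · -- not eventually positive
    intro hcon
    obtain ⟨δ, hδ, hδ'⟩ := ev_iff.mp hcon
    obtain ⟨k, hk⟩ := exists_nat_gt (1 / δ)
    have hk1 : (1:ℝ) / (k + 1) < δ := by
      rw [div_lt_iff₀ (by positivity)]
      rw [div_lt_iff₀ hδ] at hk
      nlinarith
    have hmem : E k ∈ Set.Ioo (0:ℝ) δ := ⟨hEpos k, lt_trans (hEsm k) hk1⟩
    have := hδ' (E k) hmem
    have hle : x'' (E k) ≤ 0 := by
      simp only [hx''def]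
      rw [if_pos (Set.mem_range_self k)]
      exact min_le_right _ _
    linarith

/-- From invertibility + nonnegativity: a strict rpow lower bound on x. -/
private lemma lower_bound (hρ : IsGauge ρ) {x : ℝ → ℝ}
    (hinv : GInvertible ρ x) (hle : GLe ρ 0 x) :
    ∃ c a : ℝ, 0 < c ∧ 0 < a ∧ ∀ᶠ ε in 𝓝[>] (0:ℝ), c * ρ ε ^ a ≤ x ε := by
  obtain ⟨y, ⟨a, ha, C, hC⟩, heq⟩ := hinv
  obtain ⟨C₁, hC₁⟩ := heq 1 one_pos
  obtain ⟨z, hz, hzx⟩ := hle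
  set C' : ℝ := max C 1 with hC'
  have hC'pos : (0:ℝ) < C' := lt_of_lt_of_le one_pos (le_max_right _ _)
  refine ⟨1 / (2 * C'), a, by positivity, ha, ?_⟩
  have hzlt := negl_lt hρ hz (show (0:ℝ) < 1 / (2 * C') by positivity) ha
  filter_upwards [hC, hC₁, hzx, hzlt,
    gauge_small hρ (show (0:ℝ) < 1 / (2 * (|C₁| + 1)) by positivity)]
    with ε hy hxy hzx hzlt hρε
  obtain ⟨hρpos, hρsm⟩ := hρε
  have hra : 0 < ρ ε ^ a := Real.rpow_pos_of_pos hρpos a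
  have hrna : 0 < ρ ε ^ (-a) := Real.rpow_pos_of_pos hρpos (-a)
  have hrinv : ρ ε ^ (-a) = (ρ ε ^ a)⁻¹ := by
    rw [Real.rpow_neg hρpos.le]
  have h1 : |x ε * y ε - 1| ≤ 1 / 2 := by
    have hsm' : ρ ε * (2 * (|C₁| + 1)) < 1 := by
      rw [lt_div_iff₀ (by positivity)] at hρsm
      linarith
    have h2 : |C₁| * ρ ε ≤ 1 / 2 := by nlinarith [abs_nonneg C₁, hρpos]
    have h2' : C₁ * ρ ε ≤ |C₁| * ρ ε :=
      mul_le_mul_of_nonneg_right (le_abs_self C₁) hρpos.le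
    calc |x ε * y ε - 1| ≤ C₁ * ρ ε := by
          simpa [Real.rpow_one] using hxy
      _ ≤ 1 / 2 := le_trans h2' h2
  have h2 : 1 / 2 ≤ x ε * y ε := by
    have := (abs_le.mp h1).1
    linarith
  have hyC : |y ε| ≤ C' * (ρ ε ^ a)⁻¹ := by
    rw [← hrinv]
    calc |y ε| ≤ C * ρ ε ^ (-a) := hy
      _ ≤ C' * ρ ε ^ (-a) := mul_le_mul_of_nonneg_right (le_max_left _ _) hrna.le
  have h3 : 1 / 2 ≤ |x ε| * |y ε| :=
    le_trans h2 (le_trans (le_abs_self _) (abs_mul _ _).le)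
  have h4 : 1 / 2 ≤ |x ε| * (C' * (ρ ε ^ a)⁻¹) :=
    le_trans h3 (mul_le_mul_of_nonneg_left hyC (abs_nonneg _))
  have h5 : 1 / 2 * ρ ε ^ a ≤ |x ε| * C' := by
    have h6 := mul_le_mul_of_nonneg_right h4 hra.le
    calc 1 / 2 * ρ ε ^ a ≤ |x ε| * (C' * (ρ ε ^ a)⁻¹) * ρ ε ^ a := h6
      _ = |x ε| * C' * ((ρ ε ^ a)⁻¹ * ρ ε ^ a) := by ring
      _ = |x ε| * C' := by rw [inv_mul_cancel₀ hra.ne', mul_one]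
  have hxabs : 1 / (2 * C') * ρ ε ^ a ≤ |x ε| := by
    rw [div_mul_eq_mul_div, div_le_iff₀ (by positivity : (0:ℝ) < 2 * C')]
    nlinarith [h5]
  have hxz : -(1 / (2 * C') * ρ ε ^ a) < x ε := by
    have hzx' : (0:ℝ) ≤ x ε + z ε := by simpa using hzx
    have h7 : z ε ≤ |z ε| := le_abs_self _
    linarith [hzlt]
  rcases le_or_gt 0 (x ε) with h | h
  · rwa [abs_of_nonneg h] at hxabs
  · rw [abs_of_neg h] at hxabs; linarith

/-- (iii) for x itself implies (i). -/
private lemma build_inverse (hρ : IsGauge ρ) {x : ℝ → ℝ}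
    {m : ℕ} (hm : ∀ᶠ ε in 𝓝[>] (0:ℝ), ρ ε ^ m < x ε) :
    GInvertible ρ x ∧ GLe ρ 0 x := by
  have hpos : ∀ᶠ ε in 𝓝[>] (0:ℝ), 0 < x ε ∧ ρ ε ^ m < x ε ∧ 0 < ρ ε ∧ ρ ε ≤ 1 := by
    filter_upwards [hm, gauge_small hρ one_pos] with ε h1 h2
    exact ⟨lt_trans (pow_pos h2.1 m) h1, h1, h2.1, h2.2.le⟩
  constructor
  · refine ⟨fun ε => (x ε)⁻¹, ⟨(m:ℝ) + 1, by positivity, 1, ?_⟩, ?_⟩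
    · filter_upwards [hpos] with ε ⟨hx, hm', hρp, hρ1⟩
      rw [one_mul, abs_of_nonneg (inv_nonneg.mpr hx.le)]
      have h1 : (x ε)⁻¹ ≤ (ρ ε ^ m)⁻¹ :=
        inv_anti₀ (pow_pos hρp m) hm'.le
      have h2 : (ρ ε ^ m)⁻¹ = ρ ε ^ (-(m:ℝ)) := by
        rw [Real.rpow_neg hρp.le, Real.rpow_natCast]
      have h3 : ρ ε ^ (-(m:ℝ)) ≤ ρ ε ^ (-((m:ℝ) + 1)) :=
        Real.rpow_le_rpow_of_exponent_ge hρp hρ1 (by linarith)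
      linarith [h1, h2 ▸ h1]
    · intro a ha
      refine ⟨0, ?_⟩
      filter_upwards [hpos] with ε ⟨hx, _, _, _⟩
      rw [zero_mul, Pi.sub_apply, Pi.mul_apply, Pi.one_apply,
        mul_inv_cancel₀ hx.ne', sub_self, abs_zero]
  · refine ⟨0, fun a ha => ⟨0, by filter_upwards with ε; simp⟩, ?_⟩
    filter_upwards [hpos] with ε ⟨hx, _, _, _⟩
    simpa using hx.le

end Aux

/-- Lemma (Mayer): for x ∈ ρℝ̃ the following are equivalent:
(i) x is invertible and x ≥ 0;
(ii) every representative is eventually strictly positive;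
(iii) every representative eventually exceeds ρ_ε^m for some m ∈ ℕ. -/
theorem mayer_positivity (ρ : ℝ → ℝ) (hρ : IsGauge ρ) (x : ℝ → ℝ)
    (hx : Moderate ρ x) :
    ((GInvertible ρ x ∧ GLe ρ 0 x) ↔
      (∀ x' : ℝ → ℝ, Moderate ρ x' → GEquiv ρ x' x →
        ∀ᶠ ε in 𝓝[>] (0:ℝ), 0 < x' ε)) ∧
    ((∀ x' : ℝ → ℝ, Moderate ρ x' → GEquiv ρ x' x →
        ∀ᶠ ε in 𝓝[>] (0:ℝ), 0 < x' ε) ↔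
      (∀ x' : ℝ → ℝ, Moderate ρ x' → GEquiv ρ x' x →
        ∃ m : ℕ, ∀ᶠ ε in 𝓝[>] (0:ℝ), ρ ε ^ m < x' ε)) := by
  -- (ii) → (iii)
  have h23 : (∀ x' : ℝ → ℝ, Moderate ρ x' → GEquiv ρ x' x →
        ∀ᶠ ε in 𝓝[>] (0:ℝ), 0 < x' ε) →
      (∀ x' : ℝ → ℝ, Moderate ρ x' → GEquiv ρ x' x →
        ∃ m : ℕ, ∀ᶠ ε in 𝓝[>] (0:ℝ), ρ ε ^ m < x' ε) := by
    intro h2 x' hx' hxe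
    by_contra hc
    push_neg at hc
    obtain ⟨x'', hm'', he'', hneg⟩ := core hρ hx' (fun m => by
      intro hev; exact absurd hev (by simpa using hc m))
    have : GEquiv ρ x'' x := by
      have : x'' - x = (x'' - x') + (x' - x) := by ring
      unfold GEquiv
      rw [this]
      exact negl_add he'' hxe
    exact hneg (h2 x'' hm'' this)
  -- (iii) → (ii)
  have h32 : (∀ x' : ℝ → ℝ, Moderate ρ x' → GEquiv ρ x' x →
        ∃ m : ℕ, ∀ᶠ ε in 𝓝[>] (0:ℝ), ρ ε ^ m < x' ε) →
      (∀ x' : ℝ → ℝ, Moderate ρ x' → GEquiv ρ x' x →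
        ∀ᶠ ε in 𝓝[>] (0:ℝ), 0 < x' ε) := by
    intro h3 x' hx' hxe
    obtain ⟨m, hm⟩ := h3 x' hx' hxe
    filter_upwards [hm, gauge_small hρ one_pos] with ε h1 h2
    exact lt_trans (pow_pos h2.1 m) h1
  have hself : GEquiv ρ x x := by
    intro a ha
    exact ⟨0, by filter_upwards with ε; simp⟩
  -- (i) → (ii)
  have h12 : (GInvertible ρ x ∧ GLe ρ 0 x) →
      (∀ x' : ℝ → ℝ, Moderate ρ x' → GEquiv ρ x' x →
        ∀ᶠ ε in 𝓝[>] (0:ℝ), 0 < x' ε) := by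
    rintro ⟨hinv, hle⟩ x' hx' hxe
    obtain ⟨c, a, hc, ha, hcb⟩ := lower_bound hρ hinv hle
    have hlt := negl_lt hρ hxe hc ha
    filter_upwards [hcb, hlt] with ε h1 h2
    have : x' ε = x ε + (x' ε - x ε) := by ring
    rw [this]
    have h3 : -(c * ρ ε ^ a) < x' ε - x ε := by
      have := abs_lt.mp h2
      simpa using this.1
    linarith
  -- (ii) → (i)
  have h21 : (∀ x' : ℝ → ℝ, Moderate ρ x' → GEquiv ρ x' x →
        ∀ᶠ ε in 𝓝[>] (0:ℝ), 0 < x' ε) →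
      (GInvertible ρ x ∧ GLe ρ 0 x) := by
    intro h2
    obtain ⟨m, hm⟩ := h23 h2 x hx hself
    exact build_inverse hρ hm
  exact ⟨⟨h12, h21⟩, ⟨h23, h32⟩⟩
end

section
/- Let a = [a_ε], b = [b_ε] ∈ ρℝ̃ with a < b (i.e., b - a is nonnegative and invertible). Then the sharp interior of the interval [a, b] = {x ∈ ρℝ̃ : a ≤ x ≤ b} is dense in [a, b] with respect to the sharp topology. In particular, every point of [a, b] is a sharp-topology limit of points x with a < x < b. -/
open Filter Topology

/-- x < y in ρℝ̃: y - x is nonnegative and invertible. -/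
def GLt (ρ x y : ℝ → ℝ) : Prop := GLe ρ x y ∧ GInvertible ρ (y - x)

lemma ev_good {ρ : ℝ → ℝ} (hρ : IsGauge ρ) :
    ∀ᶠ ε in 𝓝[>] (0:ℝ), 0 < ρ ε ∧ ρ ε < 1 := by
  have h1 : ∀ᶠ ε in 𝓝[>] (0:ℝ), ε ∈ Set.Ioo (0:ℝ) 1 :=
    Ioo_mem_nhdsGT_of_mem (by norm_num)
  have h2 : ∀ᶠ ε in 𝓝[>] (0:ℝ), ρ ε < 1 := hρ.2.eventually_lt_const one_pos
  filter_upwards [h1, h2] with ε hε h2 using ⟨hρ.1 ε ⟨hε.1, hε.2.le⟩, h2⟩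

lemma moderate_bound {ρ : ℝ → ℝ} (hρ : IsGauge ρ) {f : ℝ → ℝ} (hf : Moderate ρ f) :
    ∃ A C : ℝ, 0 < A ∧ 0 < C ∧ ∀ᶠ ε in 𝓝[>] (0:ℝ), |f ε| ≤ C * ρ ε ^ (-A) := by
  obtain ⟨A, hA, C, hC⟩ := hf
  refine ⟨A, max C 1, hA, lt_of_lt_of_le one_pos (le_max_right _ _), ?_⟩
  filter_upwards [hC, ev_good hρ] with ε h1 h2
  exact h1.trans (mul_le_mul_of_nonneg_right (le_max_left _ _) (Real.rpow_nonneg h2.1.le _))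

lemma neg_small {ρ : ℝ → ℝ} (hρ : IsGauge ρ) {z : ℝ → ℝ} (hz : Negligible ρ z)
    (c A : ℝ) (hc : 0 < c) :
    ∀ᶠ ε in 𝓝[>] (0:ℝ), |z ε| ≤ c * ρ ε ^ A := by
  set B := max (A + 1) 1 with hB
  obtain ⟨C, hC⟩ := hz B (lt_of_lt_of_le one_pos (le_max_right _ _))
  have hten : ∀ᶠ ε in 𝓝[>] (0:ℝ), (max C 0) * ρ ε < c := by
    have : Tendsto (fun ε => (max C 0) * ρ ε) (𝓝[>] (0:ℝ)) (𝓝 ((max C 0) * 0)) :=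
      hρ.2.const_mul _
    rw [mul_zero] at this
    exact this.eventually_lt_const hc
  filter_upwards [hC, ev_good hρ, hten] with ε h1 h2 h3
  have hρ0 := h2.1
  calc |z ε| ≤ C * ρ ε ^ B := h1
    _ ≤ (max C 0) * ρ ε ^ B :=
        mul_le_mul_of_nonneg_right (le_max_left _ _) (Real.rpow_nonneg hρ0.le _)
    _ ≤ (max C 0) * ρ ε ^ (A + 1) := by
        apply mul_le_mul_of_nonneg_left _ (le_max_right _ _)
        exact Real.rpow_le_rpow_of_exponent_ge hρ0 h2.2.le (le_max_left _ _)
    _ = ((max C 0) * ρ ε) * ρ ε ^ A := by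
        rw [Real.rpow_add hρ0, Real.rpow_one]; ring
    _ ≤ c * ρ ε ^ A :=
        mul_le_mul_of_nonneg_right h3.le (Real.rpow_nonneg hρ0.le _)

lemma glt_of_lower {ρ : ℝ → ℝ} (hρ : IsGauge ρ) {u v : ℝ → ℝ} {c A : ℝ} (hc : 0 < c)
    (h : ∀ᶠ ε in 𝓝[>] (0:ℝ), c * ρ ε ^ A ≤ v ε - u ε) : GLt ρ u v := by
  constructor
  · refine ⟨0, fun a ha => ⟨0, ?_⟩, ?_⟩
    · filter_upwards with ε; simp
    · filter_upwards [h, ev_good hρ] with ε h1 h2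
      have h3 : 0 < c * ρ ε ^ A := mul_pos hc (Real.rpow_pos_of_pos h2.1 _)
      simp only [Pi.zero_apply, add_zero]; linarith
  · refine ⟨fun ε => (v ε - u ε)⁻¹, ⟨max A 1, lt_of_lt_of_le one_pos (le_max_right _ _),
      c⁻¹, ?_⟩, ?_⟩
    · filter_upwards [h, ev_good hρ] with ε h1 h2
      have hpos : 0 < c * ρ ε ^ A := mul_pos hc (Real.rpow_pos_of_pos h2.1 _)
      have hvu : 0 < v ε - u ε := lt_of_lt_of_le hpos h1
      rw [abs_of_pos (inv_pos.2 hvu)]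
      have h4 : (v ε - u ε)⁻¹ ≤ (c * ρ ε ^ A)⁻¹ := inv_anti₀ hpos h1
      refine h4.trans ?_
      rw [mul_inv, ← Real.rpow_neg h2.1.le]
      apply mul_le_mul_of_nonneg_left _ (inv_nonneg.2 hc.le)
      exact Real.rpow_le_rpow_of_exponent_ge h2.1 h2.2.le (neg_le_neg (le_max_left A 1))
    · intro e he
      refine ⟨0, ?_⟩
      filter_upwards [h, ev_good hρ] with ε h1 h2
      have hpos : 0 < c * ρ ε ^ A := mul_pos hc (Real.rpow_pos_of_pos h2.1 _)
      have hvu : 0 < v ε - u ε := lt_of_lt_of_le hpos h1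
      simp only [Pi.sub_apply, Pi.mul_apply, Pi.one_apply]
      rw [mul_inv_cancel₀ hvu.ne', sub_self, abs_zero, zero_mul]

lemma lower_of_glt {ρ : ℝ → ℝ} (hρ : IsGauge ρ) {u v : ℝ → ℝ} (h : GLt ρ u v) :
    ∃ c A : ℝ, 0 < c ∧ ∀ᶠ ε in 𝓝[>] (0:ℝ), c * ρ ε ^ A ≤ v ε - u ε := by
  obtain ⟨⟨z, hz, hle⟩, w, hw, hinv⟩ := h
  obtain ⟨Aw, Cw, hAw, hCw, hWb⟩ := moderate_bound hρ hw
  have hhalf : ∀ᶠ ε in 𝓝[>] (0:ℝ), |(v ε - u ε) * w ε - 1| ≤ 1/2 := by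
    have := neg_small hρ hinv (1/2) 0 (by norm_num)
    filter_upwards [this] with ε h1
    simpa [Real.rpow_zero] using h1
  set c := (2 * Cw)⁻¹ with hcdef
  have hc : 0 < c := by positivity
  refine ⟨c, Aw, hc, ?_⟩
  have hzs := neg_small hρ hz (c/2) Aw (by positivity)
  filter_upwards [hhalf, hWb, hzs, hle, ev_good hρ] with ε h1 h2 h3 h4 h5
  have hρ0 := h5.1
  have habs : c * ρ ε ^ Aw ≤ |v ε - u ε| := by
    have hprod : (1:ℝ)/2 ≤ |v ε - u ε| * |w ε| := by
      rw [← abs_mul]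
      have h0 := abs_sub_abs_le_abs_sub (1:ℝ) ((v ε - u ε) * w ε)
      rw [abs_sub_comm, abs_one] at h0
      linarith
    have hwpos : 0 < Cw * ρ ε ^ (-Aw) := mul_pos hCw (Real.rpow_pos_of_pos hρ0 _)
    have h6 : (1:ℝ)/2 ≤ |v ε - u ε| * (Cw * ρ ε ^ (-Aw)) := by
      refine hprod.trans (mul_le_mul_of_nonneg_left h2 (abs_nonneg _))
    have hkey : c * ρ ε ^ Aw * (Cw * ρ ε ^ (-Aw)) = 1/2 := by
      have : ρ ε ^ Aw * ρ ε ^ (-Aw) = 1 := by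
        rw [← Real.rpow_add hρ0]; simp
      field_simp [hcdef]
      have hc2 : c * (2 * Cw) = 1 := by rw [hcdef]; exact inv_mul_cancel₀ (by positivity)
      linear_combination (ρ ε ^ Aw * ρ ε ^ (-Aw)) * hc2 + this
    nlinarith [hwpos, h6, hkey]
  have hge : -(c/2) * ρ ε ^ Aw ≤ v ε - u ε := by
    have : -(z ε) ≤ v ε - u ε := by linarith
    have h7 : -(c/2) * ρ ε ^ Aw ≤ -(z ε) := by
      have h8 := le_abs_self (z ε); linarith
    linarith
  rcases abs_cases (v ε - u ε) with ⟨he, _⟩ | ⟨he, _⟩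
  · linarith [habs, he.symm.le]
  · have hP : 0 < ρ ε ^ Aw := Real.rpow_pos_of_pos hρ0 _
    nlinarith [habs, hge, hP]


set_option maxHeartbeats 1000000

/-- If a < b in ρℝ̃ then the sharp interior of [a,b] is dense in [a,b]:
every point of [a,b] is a sharp limit of points y with a < y < b. -/
theorem interior_dense_in_interval (ρ : ℝ → ℝ) (hρ : IsGauge ρ)
    (a b : ℝ → ℝ) (ha : Moderate ρ a) (hb : Moderate ρ b)
    (hab : GLt ρ a b) :
    ∀ x : ℝ → ℝ, Moderate ρ x → GLe ρ a x → GLe ρ x b →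
      ∀ m : ℕ, ∃ y : ℝ → ℝ, Moderate ρ y ∧ GLt ρ a y ∧ GLt ρ y b ∧
        ∀ᶠ ε in 𝓝[>] (0:ℝ), |y ε - x ε| ≤ ρ ε ^ m := by
  intro x hx hax hxb m
  obtain ⟨c, A, hc, hca⟩ := lower_of_glt hρ hab
  obtain ⟨A₁, C₁, hA₁, hC₁, hb₁⟩ := moderate_bound hρ ha
  obtain ⟨A₂, C₂, hA₂, hC₂, hb₂⟩ := moderate_bound hρ hb
  obtain ⟨A₃, C₃, hA₃, hC₃, hb₃⟩ := moderate_bound hρ hx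
  obtain ⟨z₁, hz₁, hle₁⟩ := hax
  obtain ⟨z₂, hz₂, hle₂⟩ := hxb
  set A' : ℝ := max A₁ (max A₂ A₃) with hA'def
  have hA' : 0 < A' := lt_of_lt_of_le hA₁ (le_max_left _ _)
  set C' : ℝ := C₁ + C₂ + C₃ with hC'def
  have hC' : 0 < C' := by positivity
  set M : ℝ := (m : ℝ) + A' + 1 with hMdef
  have hM : 0 < M := by positivity
  set A'' : ℝ := M + A with hA''def
  set y : ℝ → ℝ := fun ε => x ε + ρ ε ^ M * ((a ε + b ε) / 2 - x ε) with hydef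
  have hy : ∀ ε, y ε = x ε + ρ ε ^ M * ((a ε + b ε) / 2 - x ε) := fun ε => rfl
  -- bound on the displacement
  have hd : ∀ᶠ ε in 𝓝[>] (0:ℝ), |(a ε + b ε) / 2 - x ε| ≤ C' * ρ ε ^ (-A') := by
    filter_upwards [hb₁, hb₂, hb₃, ev_good hρ] with ε h1 h2 h3 h4
    have hρ0 := h4.1
    have m1 : ρ ε ^ (-A₁) ≤ ρ ε ^ (-A') :=
      Real.rpow_le_rpow_of_exponent_ge hρ0 h4.2.le (neg_le_neg (le_max_left _ _))
    have m2 : ρ ε ^ (-A₂) ≤ ρ ε ^ (-A') :=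
      Real.rpow_le_rpow_of_exponent_ge hρ0 h4.2.le
        (neg_le_neg ((le_max_left _ _).trans (le_max_right _ _)))
    have m3 : ρ ε ^ (-A₃) ≤ ρ ε ^ (-A') :=
      Real.rpow_le_rpow_of_exponent_ge hρ0 h4.2.le
        (neg_le_neg ((le_max_right _ _).trans (le_max_right _ _)))
    have habs : |(a ε + b ε) / 2 - x ε| ≤ |a ε| + |b ε| + |x ε| := by
      have t1 := abs_add_le (a ε) (b ε)
      have t2 := abs_add_le ((a ε + b ε)/2) (-(x ε))
      rw [abs_neg] at t2
      have t3 : |(a ε + b ε)/2| = |a ε + b ε|/2 := by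
        rw [abs_div]; norm_num
      have t4 : (a ε + b ε)/2 - x ε = (a ε + b ε)/2 + (-(x ε)) := by ring
      rw [t4]
      refine t2.trans ?_
      rw [t3]
      linarith [abs_nonneg (a ε), abs_nonneg (b ε)]
    calc |(a ε + b ε) / 2 - x ε| ≤ |a ε| + |b ε| + |x ε| := habs
      _ ≤ C₁ * ρ ε ^ (-A') + C₂ * ρ ε ^ (-A') + C₃ * ρ ε ^ (-A') := by
          have e1 : |a ε| ≤ C₁ * ρ ε ^ (-A') := h1.trans (mul_le_mul_of_nonneg_left m1 hC₁.le)
          have e2 : |b ε| ≤ C₂ * ρ ε ^ (-A') := h2.trans (mul_le_mul_of_nonneg_left m2 hC₂.le)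
          have e3 : |x ε| ≤ C₃ * ρ ε ^ (-A') := h3.trans (mul_le_mul_of_nonneg_left m3 hC₃.le)
          linarith
      _ = C' * ρ ε ^ (-A') := by rw [hC'def]; ring
  have hsmall : ∀ᶠ ε in 𝓝[>] (0:ℝ), C' * ρ ε ≤ 1 := by
    have : Tendsto (fun ε => C' * ρ ε) (𝓝[>] (0:ℝ)) (𝓝 (C' * 0)) := hρ.2.const_mul _
    rw [mul_zero] at this
    exact (this.eventually_lt_const one_pos).mono fun ε h => h.le
  have hz1' := neg_small hρ hz₁ (c/4) A'' (by positivity)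
  have hz2' := neg_small hρ hz₂ (c/4) A'' (by positivity)
  -- closeness
  have ev1 : ∀ᶠ ε in 𝓝[>] (0:ℝ), |y ε - x ε| ≤ ρ ε ^ m := by
    filter_upwards [hd, hsmall, ev_good hρ] with ε h1 h2 h3
    have hρ0 := h3.1
    have e1 : ρ ε ^ M * ρ ε ^ (-A') = ρ ε * ρ ε ^ (m:ℝ) := by
      rw [← Real.rpow_add hρ0]
      have : M + (-A') = 1 + (m:ℝ) := by rw [hMdef]; ring
      rw [this, Real.rpow_add hρ0, Real.rpow_one]
    have htpos : 0 < ρ ε ^ M := Real.rpow_pos_of_pos hρ0 _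
    calc |y ε - x ε| = ρ ε ^ M * |(a ε + b ε) / 2 - x ε| := by
          rw [hy]; rw [show x ε + ρ ε ^ M * ((a ε + b ε) / 2 - x ε) - x ε
              = ρ ε ^ M * ((a ε + b ε) / 2 - x ε) by ring]
          rw [abs_mul, abs_of_pos htpos]
      _ ≤ ρ ε ^ M * (C' * ρ ε ^ (-A')) := by gcongr
      _ = (C' * ρ ε) * ρ ε ^ (m:ℝ) := by rw [show ρ ε ^ M * (C' * ρ ε ^ (-A'))
            = C' * (ρ ε ^ M * ρ ε ^ (-A')) by ring, e1]; ring
      _ ≤ 1 * ρ ε ^ (m:ℝ) :=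
          mul_le_mul_of_nonneg_right h2 (Real.rpow_nonneg hρ0.le _)
      _ = ρ ε ^ m := by rw [one_mul, Real.rpow_natCast]
  -- lower bound for y - a
  have ev2 : ∀ᶠ ε in 𝓝[>] (0:ℝ), (c/4) * ρ ε ^ A'' ≤ y ε - a ε := by
    filter_upwards [hca, hz1', hle₁, ev_good hρ] with ε h1 h2 h3 h4
    have hρ0 := h4.1
    set t := ρ ε ^ M with htdef
    set P := ρ ε ^ A'' with hPdef
    have ht0 : 0 < t := Real.rpow_pos_of_pos hρ0 _
    have ht1 : t ≤ 1 := Real.rpow_le_one hρ0.le h4.2.le hM.le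
    have hPnn : 0 ≤ P := Real.rpow_nonneg hρ0.le _
    have htP : t * ρ ε ^ A = P := by
      rw [htdef, hPdef, hA''def, ← Real.rpow_add hρ0]
    have k1 : -(c/4) * P ≤ x ε - a ε := by
      have := le_abs_self (z₁ ε); nlinarith [h2]
    have k2 : (1-t) * (-(c/4) * P) ≤ (1-t) * (x ε - a ε) :=
      mul_le_mul_of_nonneg_left k1 (by linarith)
    have k3 : -(c/4) * P ≤ (1-t) * (-(c/4) * P) := by
      nlinarith [mul_nonneg (mul_nonneg ht0.le hc.le) hPnn]
    have k4 : (c/2) * P ≤ (t/2) * (b ε - a ε) := by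
      have h5 : t * (c * ρ ε ^ A) ≤ t * (b ε - a ε) := mul_le_mul_of_nonneg_left h1 ht0.le
      have h6 : t * (c * ρ ε ^ A) = c * P := by rw [← htP]; ring
      linarith
    have keq : y ε - a ε = (1-t) * (x ε - a ε) + (t/2) * (b ε - a ε) := by
      rw [hy]; ring
    linarith
  -- lower bound for b - y
  have ev3 : ∀ᶠ ε in 𝓝[>] (0:ℝ), (c/4) * ρ ε ^ A'' ≤ b ε - y ε := by
    filter_upwards [hca, hz2', hle₂, ev_good hρ] with ε h1 h2 h3 h4
    have hρ0 := h4.1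
    set t := ρ ε ^ M with htdef
    set P := ρ ε ^ A'' with hPdef
    have ht0 : 0 < t := Real.rpow_pos_of_pos hρ0 _
    have ht1 : t ≤ 1 := Real.rpow_le_one hρ0.le h4.2.le hM.le
    have hPnn : 0 ≤ P := Real.rpow_nonneg hρ0.le _
    have htP : t * ρ ε ^ A = P := by
      rw [htdef, hPdef, hA''def, ← Real.rpow_add hρ0]
    have k1 : -(c/4) * P ≤ b ε - x ε := by
      have := le_abs_self (z₂ ε); nlinarith [h2]
    have k2 : (1-t) * (-(c/4) * P) ≤ (1-t) * (b ε - x ε) :=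
      mul_le_mul_of_nonneg_left k1 (by linarith)
    have k3 : -(c/4) * P ≤ (1-t) * (-(c/4) * P) := by
      nlinarith [mul_nonneg (mul_nonneg ht0.le hc.le) hPnn]
    have k4 : (c/2) * P ≤ (t/2) * (b ε - a ε) := by
      have h5 : t * (c * ρ ε ^ A) ≤ t * (b ε - a ε) := mul_le_mul_of_nonneg_left h1 ht0.le
      have h6 : t * (c * ρ ε ^ A) = c * P := by rw [← htP]; ring
      linarith
    have keq : b ε - y ε = (1-t) * (b ε - x ε) + (t/2) * (b ε - a ε) := by
      rw [hy]; ring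
    linarith
  refine ⟨y, ?_, glt_of_lower hρ (by positivity : (0:ℝ) < c/4) ev2,
    glt_of_lower hρ (by positivity : (0:ℝ) < c/4) ev3, ev1⟩
  refine ⟨A', hA', C₃ + C', ?_⟩
  filter_upwards [hb₃, hd, ev_good hρ] with ε h1 h2 h3
  have hρ0 := h3.1
  have ht1 : ρ ε ^ M ≤ 1 := Real.rpow_le_one hρ0.le h3.2.le hM.le
  have ht0 : 0 ≤ ρ ε ^ M := Real.rpow_nonneg hρ0.le _
  have m3 : ρ ε ^ (-A₃) ≤ ρ ε ^ (-A') :=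
    Real.rpow_le_rpow_of_exponent_ge hρ0 h3.2.le
      (neg_le_neg ((le_max_right _ _).trans (le_max_right _ _)))
  have hdnn : 0 ≤ C' * ρ ε ^ (-A') := (abs_nonneg _).trans h2
  calc |y ε| ≤ |x ε| + ρ ε ^ M * |(a ε + b ε)/2 - x ε| := by
        rw [hy]
        refine (abs_add_le _ _).trans ?_
        rw [abs_mul, abs_of_nonneg ht0]
    _ ≤ C₃ * ρ ε ^ (-A') + 1 * (C' * ρ ε ^ (-A')) := by
        have e3 : |x ε| ≤ C₃ * ρ ε ^ (-A') := h1.trans (mul_le_mul_of_nonneg_left m3 hC₃.le)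
        have e4 : ρ ε ^ M * |(a ε + b ε)/2 - x ε| ≤ 1 * (C' * ρ ε ^ (-A')) := by
          apply mul_le_mul ht1 h2 (abs_nonneg _) one_pos.le
        linarith
    _ = (C₃ + C') * ρ ε ^ (-A') := by ring
end

section
/- (Noether's theorem, time-independent form.) Let K : L × V → ℝ be smooth, where L, V ⊆ ℝ^n are open, and let w : (a,b) → L be smooth with ẇ(t) ∈ V solving the Euler–Lagrange equation K_u(w, ẇ) = d/dt K_{u̇}(w, ẇ). Let (X_s)_{s ∈ J} be a smooth family of maps X : J × L → L with 0 an interior point of J, such that for all t ∈ (a,b): ∂/∂t X_s(w(t)) ∈ V, X_0(w(t)) = w(t), and K(w(t), ẇ(t)) = K(X_s(w(t)), ∂/∂t X_s(w(t))) for all s ∈ J. Then the quantity t ↦ K_{u̇}(w(t), ẇ(t)) · ∂/∂s|_{s=0} X_s(w(t)) is constant on (a,b). -/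
noncomputable section
set_option maxHeartbeats 2000000

/-- Noether's theorem, time-independent form: if w solves the Euler–Lagrange
equation for K on (a,b) and (X_s) is a smooth family of maps of L with X₀ = id
along w, ∂/∂t X_s(w(t)) ∈ V, and K invariant under (X_s) along w, then
t ↦ K_u̇(w,ẇ) · ∂/∂s|₀ X_s(w(t)) is constant on (a,b). -/
theorem noether_time_independent (n : ℕ) (a b : ℝ) (hab : a < b)
    (L V : Set (EuclideanSpace ℝ (Fin n))) (hL : IsOpen L) (hV : IsOpen V)
    (K : EuclideanSpace ℝ (Fin n) → EuclideanSpace ℝ (Fin n) → ℝ)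
    (hK : ContDiffOn ℝ (⊤ : ℕ∞)
      (fun p : EuclideanSpace ℝ (Fin n) × EuclideanSpace ℝ (Fin n) =>
        K p.1 p.2) (L ×ˢ V))
    (w : ℝ → EuclideanSpace ℝ (Fin n))
    (hw : ContDiffOn ℝ (⊤ : ℕ∞) w (Set.Ioo a b))
    (hwL : ∀ t ∈ Set.Ioo a b, w t ∈ L)
    (hwV : ∀ t ∈ Set.Ioo a b, deriv w t ∈ V)
    (hEL : ∀ t ∈ Set.Ioo a b,
      gradient (fun y => K y (deriv w t)) (w t)
        = deriv (fun τ => gradient (fun v => K (w τ) v) (deriv w τ)) t)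
    (J : Set ℝ) (hJ : J ∈ nhds (0:ℝ))
    (X : ℝ → EuclideanSpace ℝ (Fin n) → EuclideanSpace ℝ (Fin n))
    (hX : ContDiffOn ℝ (⊤ : ℕ∞)
      (fun p : ℝ × EuclideanSpace ℝ (Fin n) => X p.1 p.2) (J ×ˢ L))
    (hXL : ∀ s ∈ J, ∀ x ∈ L, X s x ∈ L)
    (hXV : ∀ s ∈ J, ∀ t ∈ Set.Ioo a b, deriv (fun τ => X s (w τ)) t ∈ V)
    (hX0 : ∀ t ∈ Set.Ioo a b, X 0 (w t) = w t)
    (hinv : ∀ s ∈ J, ∀ t ∈ Set.Ioo a b,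
      K (w t) (deriv w t) = K (X s (w t)) (deriv (fun τ => X s (w τ)) t)) :
    ∃ c : ℝ, ∀ t ∈ Set.Ioo a b,
      (inner ℝ (gradient (fun v => K (w t) v) (deriv w t))
        (deriv (fun s => X s (w t)) 0) : ℝ) = c := by
  classical
  have hone : (1 : WithTop ℕ∞) ≤ ((⊤ : ℕ∞) : WithTop ℕ∞) := by exact_mod_cast le_top
  have htwo : (2 : WithTop ℕ∞) ≤ ((⊤ : ℕ∞) : WithTop ℕ∞) := by
    have : ((2:ℕ∞) : WithTop ℕ∞) ≤ ((⊤ : ℕ∞) : WithTop ℕ∞) := by exact_mod_cast le_top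
    simpa using this
  have hsucc : ((⊤ : ℕ∞) : WithTop ℕ∞) + 1 ≤ ((⊤ : ℕ∞) : WithTop ℕ∞) := by
    exact_mod_cast le_top
  set U : Set ℝ := Set.Ioo a b with hUdef
  have hUopen : IsOpen U := isOpen_Ioo
  set K' : EuclideanSpace ℝ (Fin n) × EuclideanSpace ℝ (Fin n) → ℝ := fun p => K p.1 p.2 with hK'def
  have hOK : IsOpen (L ×ˢ V) := hL.prod hV
  have hmem : ∀ t ∈ U, (w t, deriv w t) ∈ L ×ˢ V := fun t ht => ⟨hwL t ht, hwV t ht⟩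
  -- J' : open core of J around 0
  set J' : Set ℝ := interior J with hJ'def
  have hJ'open : IsOpen J' := isOpen_interior
  have hJ'0 : (0:ℝ) ∈ J' := mem_interior_iff_mem_nhds.2 hJ
  have hJ'sub : J' ⊆ J := interior_subset
  -- the map G and its smoothness
  set G : ℝ × ℝ → EuclideanSpace ℝ (Fin n) := fun p => X p.1 (w p.2) with hGdef
  have hGon : ContDiffOn ℝ (⊤ : ℕ∞) G (J ×ˢ U) := by
    have hψ : ContDiffOn ℝ (⊤ : ℕ∞) (fun p : ℝ × ℝ => ((p.1, w p.2) : ℝ × EuclideanSpace ℝ (Fin n)))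
        (J ×ˢ U) := by
      apply ContDiffOn.prodMk
      · exact contDiff_fst.contDiffOn
      · exact hw.comp (contDiff_snd.contDiffOn (s := J ×ˢ U)) (fun p hp => hp.2)
    exact hX.comp hψ (fun p hp => ⟨hp.1, hwL p.2 hp.2⟩)
  have hGat : ∀ s ∈ J', ∀ t ∈ U, ContDiffAt ℝ (⊤ : ℕ∞) G (s, t) := by
    intro s hs t ht
    exact hGon.contDiffAt
      (prod_mem_nhds (mem_nhds_iff.2 ⟨J', hJ'sub, hJ'open, hs⟩) (hUopen.mem_nhds ht))
  set DG : ℝ × ℝ → (ℝ × ℝ) →L[ℝ] EuclideanSpace ℝ (Fin n) := fderiv ℝ G with hDGdef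
  have hDGat : ∀ s ∈ J', ∀ t ∈ U, ContDiffAt ℝ (⊤ : ℕ∞) DG (s, t) := by
    intro s hs t ht
    exact (hGat s hs t ht).fderiv_right hsucc
  set e₁ : ℝ × ℝ := (1, 0) with he₁
  set e₂ : ℝ × ℝ := (0, 1) with he₂
  -- time-derivatives along w
  have key1 : ∀ s ∈ J', ∀ t ∈ U,
      HasDerivAt (fun τ => X s (w τ)) (DG (s, t) e₂) t := by
    intro s hs t ht
    have hd : HasFDerivAt G (DG (s, t)) (s, t) :=
      ((hGat s hs t ht).differentiableAt (by simp)).hasFDerivAt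
    have hc : HasDerivAt (fun τ : ℝ => ((s, τ) : ℝ × ℝ)) e₂ t :=
      (hasDerivAt_const t s).prodMk (hasDerivAt_id t)
    exact hd.comp_hasDerivAt t hc
  -- s-derivatives
  have key2 : ∀ t ∈ U, HasDerivAt (fun s => X s (w t)) (DG (0, t) e₁) 0 := by
    intro t ht
    have hd : HasFDerivAt G (DG (0, t)) (0, t) :=
      ((hGat 0 hJ'0 t ht).differentiableAt (by simp)).hasFDerivAt
    have hc : HasDerivAt (fun s : ℝ => ((s, t) : ℝ × ℝ)) e₁ 0 :=
      (hasDerivAt_id 0).prodMk (hasDerivAt_const 0 t)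
    exact hd.comp_hasDerivAt 0 hc
  -- values and t-derivative at s = 0
  have hG0 : ∀ t ∈ U, G (0, t) = w t := fun t ht => hX0 t ht
  have hdt0 : ∀ t ∈ U, DG (0, t) e₂ = deriv w t := by
    intro t ht
    have h1 : deriv (fun τ => X 0 (w τ)) t = DG (0, t) e₂ := (key1 0 hJ'0 t ht).deriv
    rw [← h1]
    apply Filter.EventuallyEq.deriv_eq
    filter_upwards [hUopen.mem_nhds ht] with τ hτ using hX0 τ hτ
  -- gradient identities
  have hKat : ∀ q ∈ L ×ˢ V, ContDiffAt ℝ (⊤ : ℕ∞) K' q :=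
    fun q hq => hK.contDiffAt (hOK.mem_nhds hq)
  have hKd : ∀ q ∈ L ×ˢ V, HasFDerivAt K' (fderiv ℝ K' q) q :=
    fun q hq => ((hKat q hq).differentiableAt (by simp)).hasFDerivAt
  have hfd2 : ∀ q ∈ L ×ˢ V, HasFDerivAt (fun v => K q.1 v)
      ((fderiv ℝ K' q).comp (ContinuousLinearMap.inr ℝ (EuclideanSpace ℝ (Fin n)) (EuclideanSpace ℝ (Fin n)))) q.2 := by
    intro q hq
    have hc : HasFDerivAt (fun v : EuclideanSpace ℝ (Fin n) => ((q.1, v) : EuclideanSpace ℝ (Fin n) × EuclideanSpace ℝ (Fin n)))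
        (ContinuousLinearMap.inr ℝ (EuclideanSpace ℝ (Fin n)) (EuclideanSpace ℝ (Fin n))) q.2 := hasFDerivAt_prodMk_right q.1 q.2
    exact (hKd q hq).comp q.2 hc
  have hfd1 : ∀ q ∈ L ×ˢ V, HasFDerivAt (fun y => K y q.2)
      ((fderiv ℝ K' q).comp (ContinuousLinearMap.inl ℝ (EuclideanSpace ℝ (Fin n)) (EuclideanSpace ℝ (Fin n)))) q.1 := by
    intro q hq
    have hc : HasFDerivAt (fun y : EuclideanSpace ℝ (Fin n) => ((y, q.2) : EuclideanSpace ℝ (Fin n) × EuclideanSpace ℝ (Fin n)))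
        (ContinuousLinearMap.inl ℝ (EuclideanSpace ℝ (Fin n)) (EuclideanSpace ℝ (Fin n))) q.1 := hasFDerivAt_prodMk_left q.1 q.2
    exact (hKd q hq).comp q.1 hc
  have hgrad2 : ∀ q ∈ L ×ˢ V, ∀ u : EuclideanSpace ℝ (Fin n),
      (inner ℝ (gradient (fun v => K q.1 v) q.2) u : ℝ) = fderiv ℝ K' q (0, u) := by
    intro q hq u
    rw [gradient, InnerProductSpace.toDual_symm_apply, (hfd2 q hq).fderiv]
    simp
  have hgrad1 : ∀ q ∈ L ×ˢ V, ∀ u : EuclideanSpace ℝ (Fin n),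
      (inner ℝ (gradient (fun y => K y q.2) q.1) u : ℝ) = fderiv ℝ K' q (u, 0) := by
    intro q hq u
    rw [gradient, InnerProductSpace.toDual_symm_apply, (hfd1 q hq).fderiv]
    simp
  -- the map Φ giving the second-variable gradient, and its smoothness
  set Φ : EuclideanSpace ℝ (Fin n) × EuclideanSpace ℝ (Fin n) → EuclideanSpace ℝ (Fin n) := fun q => (InnerProductSpace.toDual ℝ (EuclideanSpace ℝ (Fin n))).symm
    ((fderiv ℝ K' q).comp (ContinuousLinearMap.inr ℝ (EuclideanSpace ℝ (Fin n)) (EuclideanSpace ℝ (Fin n)))) with hΦdef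
  have hΦeq : ∀ q ∈ L ×ˢ V, gradient (fun v => K q.1 v) q.2 = Φ q := by
    intro q hq
    rw [gradient, (hfd2 q hq).fderiv]
  have hΦsmooth : ContDiffOn ℝ (⊤ : ℕ∞) Φ (L ×ˢ V) := by
    have hDK : ContDiffOn ℝ (⊤ : ℕ∞) (fderiv ℝ K') (L ×ˢ V) :=
      hK.fderiv_of_isOpen hOK (le_of_eq (by simp))
    have hlin : ContDiff ℝ (⊤ : ℕ∞) (fun A : (EuclideanSpace ℝ (Fin n) × EuclideanSpace ℝ (Fin n)) →L[ℝ] ℝ =>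
        (InnerProductSpace.toDual ℝ (EuclideanSpace ℝ (Fin n))).symm (A.comp (ContinuousLinearMap.inr ℝ (EuclideanSpace ℝ (Fin n)) (EuclideanSpace ℝ (Fin n))))) := by
      have h1 : ContDiff ℝ (⊤ : ℕ∞) (fun A : (EuclideanSpace ℝ (Fin n) × EuclideanSpace ℝ (Fin n)) →L[ℝ] ℝ =>
          A.comp (ContinuousLinearMap.inr ℝ (EuclideanSpace ℝ (Fin n)) (EuclideanSpace ℝ (Fin n)))) :=
        ((ContinuousLinearMap.compL ℝ (EuclideanSpace ℝ (Fin n)) (EuclideanSpace ℝ (Fin n) × EuclideanSpace ℝ (Fin n)) ℝ).flip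
          (ContinuousLinearMap.inr ℝ (EuclideanSpace ℝ (Fin n)) (EuclideanSpace ℝ (Fin n)))).contDiff
      exact ((InnerProductSpace.toDual ℝ (EuclideanSpace ℝ (Fin n))).symm.contDiff).comp h1
    exact hlin.comp_contDiffOn hDK
  -- g : second-variable gradient along the trajectory
  set g : ℝ → EuclideanSpace ℝ (Fin n) := fun τ => gradient (fun v => K (w τ) v) (deriv w τ) with hgdef
  have hw' : ContDiffOn ℝ (⊤ : ℕ∞) (deriv w) U := hw.deriv_of_isOpen hUopen (le_of_eq (by simp))
  have hg_diff : ∀ t ∈ U, DifferentiableAt ℝ g t := by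
    intro t ht
    have heq : g =ᶠ[nhds t] fun τ => Φ (w τ, deriv w τ) := by
      filter_upwards [hUopen.mem_nhds ht] with τ hτ
      exact hΦeq (w τ, deriv w τ) (hmem τ hτ)
    rw [Filter.EventuallyEq.differentiableAt_iff heq]
    have hwd : DifferentiableAt ℝ w t :=
      (hw.contDiffAt (hUopen.mem_nhds ht)).differentiableAt (by simp)
    have hw'd : DifferentiableAt ℝ (deriv w) t :=
      (hw'.contDiffAt (hUopen.mem_nhds ht)).differentiableAt (by simp)
    have hΦd : DifferentiableAt ℝ Φ (w t, deriv w t) :=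
      (hΦsmooth.contDiffAt (hOK.mem_nhds (hmem t ht))).differentiableAt (by simp)
    exact DifferentiableAt.comp (g := Φ) t hΦd (hwd.prodMk hw'd)
  -- the conserved quantity, expressed through DG
  set f : ℝ → ℝ := fun τ => (inner ℝ (g τ) (DG (0, τ) e₁) : ℝ) with hfdef
  -- derivative of f vanishes on U
  have hf' : ∀ t ∈ U, HasDerivAt f 0 t := by
    intro t ht
    set P : ℝ × ℝ := (0, t) with hP
    have hA : HasFDerivAt DG (fderiv ℝ DG P) P :=
      ((hDGat 0 hJ'0 t ht).differentiableAt (by simp)).hasFDerivAt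
    set A : (ℝ × ℝ) →L[ℝ] (ℝ × ℝ) →L[ℝ] EuclideanSpace ℝ (Fin n) := fderiv ℝ DG P with hAdef
    -- derivative of h : τ ↦ DG (0, τ) e₁
    have hh_deriv : HasDerivAt (fun τ => DG (0, τ) e₁) (A e₂ e₁) t := by
      have hc : HasDerivAt (fun τ : ℝ => ((0, τ) : ℝ × ℝ)) e₂ t :=
        (hasDerivAt_const t (0:ℝ)).prodMk (hasDerivAt_id t)
      have happ : HasFDerivAt (fun p => DG p e₁)
          ((ContinuousLinearMap.apply ℝ (EuclideanSpace ℝ (Fin n)) e₁).comp A) P :=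
        (ContinuousLinearMap.apply ℝ (EuclideanSpace ℝ (Fin n)) e₁).hasFDerivAt.comp P hA
      have := happ.comp_hasDerivAt t hc
      exact this
    -- derivative of s ↦ DG (s, t) e₂ at 0
    have hm_deriv : HasDerivAt (fun s => DG (s, t) e₂) (A e₁ e₂) 0 := by
      have hc : HasDerivAt (fun s : ℝ => ((s, t) : ℝ × ℝ)) e₁ 0 :=
        (hasDerivAt_id 0).prodMk (hasDerivAt_const 0 t)
      have happ : HasFDerivAt (fun p => DG p e₂)
          ((ContinuousLinearMap.apply ℝ (EuclideanSpace ℝ (Fin n)) e₂).comp A) P :=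
        (ContinuousLinearMap.apply ℝ (EuclideanSpace ℝ (Fin n)) e₂).hasFDerivAt.comp P hA
      have := happ.comp_hasDerivAt 0 hc
      exact this
    -- symmetry of second derivative
    have hsym : A e₂ e₁ = A e₁ e₂ := by
      exact (hGat 0 hJ'0 t ht).isSymmSndFDerivAt (by simpa using htwo) e₂ e₁
    -- differentiate the invariance identity in s at 0
    have hφ : fderiv ℝ K' (w t, deriv w t) (DG P e₁, A e₁ e₂) = 0 := by
      have hq : HasDerivAt (fun s => ((G (s, t), DG (s, t) e₂) : EuclideanSpace ℝ (Fin n) × EuclideanSpace ℝ (Fin n)))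
          (DG P e₁, A e₁ e₂) 0 := (key2 t ht).prodMk hm_deriv
      have hq0 : ((G (0, t), DG (0, t) e₂) : EuclideanSpace ℝ (Fin n) × EuclideanSpace ℝ (Fin n)) = (w t, deriv w t) := by
        rw [hG0 t ht, hdt0 t ht]
      have hchain : HasDerivAt (fun s => K' (G (s, t), DG (s, t) e₂))
          (fderiv ℝ K' (w t, deriv w t) (DG P e₁, A e₁ e₂)) 0 := by
        have := (hKd _ (hq0 ▸ hmem t ht)).comp_hasDerivAt 0 hq
        rwa [hq0] at this
      have hconst : HasDerivAt (fun s => K' (G (s, t), DG (s, t) e₂)) 0 0 := by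
        have hev : (fun s => K' (G (s, t), DG (s, t) e₂)) =ᶠ[nhds 0]
            fun _ => K (w t) (deriv w t) := by
          filter_upwards [hJ'open.mem_nhds hJ'0] with s hs
          have h1 : DG (s, t) e₂ = deriv (fun τ => X s (w τ)) t := (key1 s hs t ht).deriv.symm
          simp only [hK'def, h1]
          exact (hinv s (hJ'sub hs) t ht).symm
        exact (hasDerivAt_const (0:ℝ) (K (w t) (deriv w t))).congr_of_eventuallyEq hev
      exact hchain.unique hconst
    -- split hφ into the two gradient terms
    have hsplit : (inner ℝ (gradient (fun y => K y (deriv w t)) (w t)) (DG P e₁) : ℝ)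
        + (inner ℝ (g t) (A e₁ e₂) : ℝ) = 0 := by
      have h1 := hgrad1 (w t, deriv w t) (hmem t ht) (DG P e₁)
      have h2 := hgrad2 (w t, deriv w t) (hmem t ht) (A e₁ e₂)
      rw [h1, h2, ← map_add]
      rw [show ((DG P e₁, 0) : EuclideanSpace ℝ (Fin n) × EuclideanSpace ℝ (Fin n)) + (0, A e₁ e₂) = (DG P e₁, A e₁ e₂) by simp]
      exact hφ
    -- product rule
    have hgd : HasDerivAt g (deriv g t) t := (hg_diff t ht).hasDerivAt
    have hprod : HasDerivAt f
        ((inner ℝ (g t) (A e₂ e₁) : ℝ) + (inner ℝ (deriv g t) (DG P e₁) : ℝ)) t :=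
      hgd.inner ℝ hh_deriv
    have hval : (inner ℝ (g t) (A e₂ e₁) : ℝ) + (inner ℝ (deriv g t) (DG P e₁) : ℝ) = 0 := by
      rw [hsym, ← hEL t ht]
      rw [add_comm]
      exact hsplit
    rwa [hval] at hprod
  -- f is constant on U
  have hUconv : Convex ℝ U := convex_Ioo a b
  set t₀ : ℝ := (a + b) / 2 with ht₀def
  have ht₀ : t₀ ∈ U := ⟨by linarith, by linarith⟩
  refine ⟨f t₀, fun t ht => ?_⟩
  have hconst : f t = f t₀ := by
    apply hUconv.is_const_of_fderivWithin_eq_zero (𝕜 := ℝ) ?_ ?_ ht ht₀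
    · intro τ hτ
      exact ((hf' τ hτ).differentiableAt).differentiableWithinAt
    · intro τ hτ
      have h0 : HasFDerivAt f (0 : ℝ →L[ℝ] ℝ) τ := by
        have h := (hf' τ hτ).hasFDerivAt
        rwa [ContinuousLinearMap.toSpanSingleton_zero] at h
      rw [fderivWithin_of_isOpen hUopen hτ, h0.fderiv]
  have hfin : (inner ℝ (gradient (fun v => K (w t) v) (deriv w t))
      (deriv (fun s => X s (w t)) 0) : ℝ) = f t := by
    rw [hfdef]
    congr 1
    exact (key2 t ht).deriv
  rw [hfin, hconst]
end
end
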